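/- Under the regularity setting, any sequence (ξ̂ₙ) of maximum likelihood estimators is strongly consistent for the Kullback–Leibler projection: almost surely, ξ̂ₙ → ξ* as n → ∞. -/

import Mathlib

open MeasureTheory ProbabilityTheory Filter

noncomputable section

/-- The regularity setting (R3)–(R8) for a statistical model `{f(·|ξ) : ξ ∈ Ξ}`
on countable data, with respect to the data-generating pmf `q`. -/
structure RegularModel (Y : Type) (q : Y → ℝ) (d : ℕ) where
  Xi : Set (EuclideanSpace ℝ (Fin d))
  Xi_open : IsOpen Xi
  Xi_nonempty : Xi.Nonempty
  f : Y → EuclideanSpace ℝ (Fin d) → ℝ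
  f_pos : ∀ y, ∀ ξ ∈ Xi, 0 < f y ξ
  f_pmf : ∀ ξ ∈ Xi, ∑' y, f y ξ = 1
  xistar : EuclideanSpace ℝ (Fin d)
  xistar_mem : xistar ∈ Xi
  /-- (R3): the Kullback–Leibler divergence is finite (summable) at `xistar`. -/
  R3_summable : Summable (fun y => q y * Real.log (q y / f y xistar))
  /-- (R3): `xistar` is the unique minimizer of the Kullback–Leibler divergence over `Xi`. -/
  R3_unique_min : ∀ ξ ∈ Xi, ξ ≠ xistar →
    ¬ Summable (fun y => q y * Real.log (q y / f y ξ)) ∨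
      (∑' y, q y * Real.log (q y / f y xistar)) < ∑' y, q y * Real.log (q y / f y ξ)
  /-- (R4): finite second moment of the log-likelihood ratio at `xistar`. -/
  R4 : Summable (fun y => q y * (Real.log (q y / f y xistar)) ^ 2)
  /-- gradient of the unit log-likelihood -/
  s : Y → EuclideanSpace ℝ (Fin d) → EuclideanSpace ℝ (Fin d)
  /-- Hessian of the unit log-likelihood -/
  H : Y → EuclideanSpace ℝ (Fin d) → EuclideanSpace ℝ (Fin d) →L[ℝ] EuclideanSpace ℝ (Fin d)
  /-- (R5): the unit log-likelihood has gradient `s` on `Xi`. -/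
  R5_grad : ∀ y, ∀ ξ ∈ Xi, HasGradientAt (fun ξ' => Real.log (f y ξ')) (s y ξ) ξ
  /-- (R5): the gradient has derivative (Hessian) `H` on `Xi`. -/
  R5_hess : ∀ y, ∀ ξ ∈ Xi, HasFDerivAt (s y) (H y ξ) ξ
  /-- (R5): the Hessian is continuous on `Xi`. -/
  R5_cont : ∀ y, ContinuousOn (H y) Xi
  /-- (R6) -/
  R6_log : Summable (fun y => q y * |Real.log (f y xistar)|)
  /-- (R6) -/
  R6_score : Summable (fun y => q y * ‖s y xistar‖ ^ 2)
  /-- radius of the ball `B` of (R7) -/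
  r : ℝ
  r_pos : 0 < r
  ball_subset : Metric.ball xistar r ⊆ Xi
  c : Y → ℝ
  c_nonneg : ∀ y, 0 ≤ c y
  c_summable : Summable (fun y => q y * c y)
  /-- (R7): domination of the Hessian on the ball `B`. -/
  R7_bound : ∀ y, ∀ ξ ∈ Metric.ball xistar r, ‖H y ξ‖ ≤ c y
  /-- (R8): connected upper level sets of all average log-likelihoods. -/
  R8 : ∀ (n : ℕ) (ys : Fin n → Y) (lam : ℝ),
    IsPreconnected {ξ | ξ ∈ Xi ∧ lam < (1 / (n : ℝ)) * ∑ i, Real.log (f (ys i) ξ)}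

/-- The ball `B` of assumption (R7). -/
def RegularModel.B {Y : Type} {q : Y → ℝ} {d : ℕ} (M : RegularModel Y q d) :
    Set (EuclideanSpace ℝ (Fin d)) :=
  Metric.ball M.xistar M.r

/-- `yseq` are i.i.d. random variables on `(Ω, P)` with common pmf `q`. -/
def IIDData {Ω Y : Type} [MeasurableSpace Ω] [MeasurableSpace Y]
    (P : Measure Ω) (yseq : ℕ → Ω → Y) (q : Y → ℝ) : Prop :=
  (∀ i, Measurable (yseq i)) ∧
    iIndepFun yseq P ∧
      ∀ i y, (P {ω | yseq i ω = y}).toReal = q y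

/-- The average log-likelihood based on the data `ys`. -/
def avgLogLik {Y : Type} {d : ℕ} (f : Y → EuclideanSpace ℝ (Fin d) → ℝ)
    (n : ℕ) (ys : Fin n → Y) (ξ : EuclideanSpace ℝ (Fin d)) : ℝ :=
  (1 / (n : ℝ)) * ∑ i, Real.log (f (ys i) ξ)

/-- `est` is a sequence of maximum-likelihood estimators: `est n` is a measurable,
`Ξ`-valued function of the first `n` observations which, almost surely, for all
sufficiently large `n`, globally maximizes the average log-likelihood over `Ξ`. -/
def IsMLESeq {Ω Y : Type} [MeasurableSpace Ω] [MeasurableSpace Y] {q : Y → ℝ} {d : ℕ}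
    (M : RegularModel Y q d) (P : Measure Ω) (yseq : ℕ → Ω → Y)
    (est : (n : ℕ) → (Fin n → Y) → EuclideanSpace ℝ (Fin d)) : Prop :=
  (∀ n, Measurable (est n)) ∧ (∀ n ys, est n ys ∈ M.Xi) ∧
    ∀ᵐ ω ∂P, ∃ N : ℕ, ∀ n ≥ N, ∀ ξ ∈ M.Xi,
      avgLogLik M.f n (fun i => yseq i ω) ξ ≤
        avgLogLik M.f n (fun i => yseq i ω) (est n (fun i => yseq i ω))

/-- A sequence of real random variables is bounded in probability. -/
def BoundedInProb {Ω : Type} [MeasurableSpace Ω] (P : Measure Ω) (R : ℕ → Ω → ℝ) : Prop :=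
  ∀ ε > (0 : ℝ), ∃ M > (0 : ℝ), ∃ N : ℕ, ∀ n ≥ N, (P {ω | M < |R n ω|}).toReal < ε

end

noncomputable section AuxiliaryForProof

section Helpers

open MeasureTheory ProbabilityTheory Filter Topology
open scoped ENNReal NNReal

variable {Ω Y : Type} [Countable Y] [MeasurableSpace Y] [MeasurableSingletonClass Y]
  [MeasurableSpace Ω] {P : MeasureTheory.Measure Ω} [MeasureTheory.IsProbabilityMeasure P]
  {yseq : ℕ → Ω → Y} {q : Y → ℝ}

lemma iid_map_singleton (hiid : IIDData P yseq q) (i : ℕ) (y : Y) :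
    (Measure.map (yseq i) P) {y} = ENNReal.ofReal (q y) := by
  rw [Measure.map_apply (hiid.1 i) (measurableSet_singleton y)]
  have h := hiid.2.2 i y
  have h2 : yseq i ⁻¹' {y} = {ω | yseq i ω = y} := rfl
  rw [h2, ← h, ENNReal.ofReal_toReal (measure_ne_top _ _)]

lemma slln_pmf (hiid : IIDData P yseq q) (g : Y → ℝ)
    (hg : Summable fun y => q y * |g y|) :
    ∀ᵐ ω ∂P, Tendsto (fun n : ℕ => (∑ i ∈ Finset.range n, g (yseq i ω)) / n)
      atTop (𝓝 (∑' y, q y * g y)) := by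
  have mg : Measurable g := measurable_of_countable g
  have hq0 : ∀ y, 0 ≤ q y := fun y => (hiid.2.2 0 y) ▸ ENNReal.toReal_nonneg
  set μ := Measure.map (yseq 0) P with hμ
  have hμy : ∀ y, μ {y} = ENNReal.ofReal (q y) := iid_map_singleton hiid 0
  have hsum' : Summable fun y => |g y| * q y := by
    simpa [mul_comm] using hg
  have hgint : Integrable g μ := by
    refine ⟨mg.aestronglyMeasurable, ?_⟩
    rw [HasFiniteIntegral, lintegral_countable']
    have : ∀ y, ‖g y‖ₑ * μ {y} = ENNReal.ofReal (|g y| * q y) := by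
      intro y
      rw [hμy y, Real.enorm_eq_ofReal_abs, ← ENNReal.ofReal_mul (abs_nonneg _)]
    rw [tsum_congr this, ← ENNReal.ofReal_tsum_of_nonneg
      (fun y => mul_nonneg (abs_nonneg _) (hq0 y)) hsum']
    exact ENNReal.ofReal_lt_top
  have hint : Integrable (fun ω => g (yseq 0 ω)) P := by
    exact (integrable_map_measure (μ := P) mg.aestronglyMeasurable
      (hiid.1 0).aemeasurable).1 hgint
  have hindep : Pairwise (Function.onFun (IndepFun · · P) fun i ω => g (yseq i ω)) := by
    intro i j hij
    exact (hiid.2.1.indepFun hij).comp mg mg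
  have hident : ∀ i, IdentDistrib (fun ω => g (yseq i ω)) (fun ω => g (yseq 0 ω)) P P := by
    intro i
    refine ⟨(mg.comp (hiid.1 i)).aemeasurable, (mg.comp (hiid.1 0)).aemeasurable, ?_⟩
    have hmapi : Measure.map (yseq i) P = Measure.map (yseq 0) P := by
      apply MeasureTheory.Measure.ext_of_singleton
      intro y
      rw [iid_map_singleton hiid i y, iid_map_singleton hiid 0 y]
    calc Measure.map (fun ω => g (yseq i ω)) P
        = Measure.map g (Measure.map (yseq i) P) :=
          (Measure.map_map mg (hiid.1 i)).symm
      _ = Measure.map g (Measure.map (yseq 0) P) := by rw [hmapi]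
      _ = Measure.map (fun ω => g (yseq 0 ω)) P := Measure.map_map mg (hiid.1 0)
  have hInt : P[fun ω => g (yseq 0 ω)] = ∑' y, q y * g y := by
    have h1 : ∫ ω, g (yseq 0 ω) ∂P = ∫ y, g y ∂μ :=
      (integral_map (hiid.1 0).aemeasurable mg.aestronglyMeasurable).symm
    rw [show P[fun ω => g (yseq 0 ω)] = ∫ ω, g (yseq 0 ω) ∂P from rfl, h1,
      integral_countable' hgint]
    apply tsum_congr
    intro y
    rw [measureReal_def, hμy y, ENNReal.toReal_ofReal (hq0 y), smul_eq_mul]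
  have := strong_law_ae_real (fun i ω => g (yseq i ω)) hint hindep hident
  rw [hInt] at this
  exact this

end Helpers
section ModelLemmas

open Filter Topology MeasureTheory

variable {Y : Type} {q : Y → ℝ} {d : ℕ}

/-- The per-observation Lipschitz bound for the log-likelihood on the ball `B`. -/
def RegularModel.lipBound (M : RegularModel Y q d) (y : Y) : ℝ :=
  ‖M.s y M.xistar‖ + M.c y * M.r

/-- The population mean log-likelihood. -/
def RegularModel.loglik (M : RegularModel Y q d) (ξ : EuclideanSpace ℝ (Fin d)) : ℝ :=
  ∑' y, q y * Real.log (M.f y ξ)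

namespace RegularModel

variable (M : RegularModel Y q d)

lemma lipBound_nonneg (y : Y) : 0 ≤ M.lipBound y :=
  add_nonneg (norm_nonneg _) (mul_nonneg (M.c_nonneg y) M.r_pos.le)

lemma xistar_mem_B : M.xistar ∈ M.B := Metric.mem_ball_self M.r_pos

lemma s_bound (y : Y) {ξ : EuclideanSpace ℝ (Fin d)} (hξ : ξ ∈ M.B) :
    ‖M.s y ξ‖ ≤ M.lipBound y := by
  have h := (convex_ball M.xistar M.r).norm_image_sub_le_of_norm_hasFDerivWithin_le
    (f := M.s y) (f' := M.H y)
    (fun x hx => (M.R5_hess y x (M.ball_subset hx)).hasFDerivWithinAt)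
    (fun x hx => M.R7_bound y x hx) M.xistar_mem_B hξ
  have h2 : ‖ξ - M.xistar‖ ≤ M.r := by
    have := mem_ball_iff_norm.1 hξ
    linarith
  have h3 : M.c y * ‖ξ - M.xistar‖ ≤ M.c y * M.r :=
    mul_le_mul_of_nonneg_left h2 (M.c_nonneg y)
  have h4 := norm_sub_norm_le (M.s y ξ) (M.s y M.xistar)
  unfold lipBound
  linarith

lemma logf_lip (y : Y) {ξ ξ' : EuclideanSpace ℝ (Fin d)} (hξ : ξ ∈ M.B) (hξ' : ξ' ∈ M.B) :
    |Real.log (M.f y ξ) - Real.log (M.f y ξ')| ≤ M.lipBound y * ‖ξ - ξ'‖ := by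
  have h := (convex_ball M.xistar M.r).norm_image_sub_le_of_norm_hasFDerivWithin_le
    (f := fun x => Real.log (M.f y x))
    (f' := fun x => InnerProductSpace.toDual ℝ _ (M.s y x))
    (fun x hx => ((M.R5_grad y x (M.ball_subset hx)).hasFDerivAt).hasFDerivWithinAt)
    (fun x hx => by
      rw [LinearIsometryEquiv.norm_map]
      exact M.s_bound y hx) hξ' hξ
  simpa [Real.norm_eq_abs] using h

lemma lipBound_summable (hq : ∀ y, 0 ≤ q y) (hqs : Summable q) :
    Summable (fun y => q y * M.lipBound y) := by
  have h1 : Summable (fun y => q y * ‖M.s y M.xistar‖) := by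
    apply Summable.of_nonneg_of_le
      (fun y => mul_nonneg (hq y) (norm_nonneg _))
      (fun y => ?_) (hqs.add M.R6_score)
    have : ‖M.s y M.xistar‖ ≤ 1 + ‖M.s y M.xistar‖ ^ 2 := by nlinarith [sq_nonneg (‖M.s y M.xistar‖ - 1)]
    calc q y * ‖M.s y M.xistar‖ ≤ q y * (1 + ‖M.s y M.xistar‖ ^ 2) :=
          mul_le_mul_of_nonneg_left this (hq y)
      _ = q y + q y * ‖M.s y M.xistar‖ ^ 2 := by ring
  have h2 : Summable (fun y => q y * (M.c y * M.r)) := by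
    have := M.c_summable.mul_right M.r
    simpa [mul_assoc] using this
  have := h1.add h2
  apply this.congr
  intro y
  unfold lipBound
  ring

lemma summable_abs_logf (hq : ∀ y, 0 ≤ q y) (hqs : Summable q)
    {ξ : EuclideanSpace ℝ (Fin d)} (hξ : ξ ∈ M.B) :
    Summable (fun y => q y * |Real.log (M.f y ξ)|) := by
  apply Summable.of_nonneg_of_le (fun y => mul_nonneg (hq y) (abs_nonneg _)) (fun y => ?_)
    (M.R6_log.add ((M.lipBound_summable hq hqs).mul_right M.r))
  have h1 : |Real.log (M.f y ξ)| ≤ |Real.log (M.f y M.xistar)| + M.lipBound y * ‖ξ - M.xistar‖ := by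
    have := M.logf_lip y hξ M.xistar_mem_B
    have h4 := abs_sub_abs_le_abs_sub (Real.log (M.f y ξ)) (Real.log (M.f y M.xistar))
    linarith
  have h2 : ‖ξ - M.xistar‖ ≤ M.r := by
    have := mem_ball_iff_norm.1 hξ; linarith
  have h3 : M.lipBound y * ‖ξ - M.xistar‖ ≤ M.lipBound y * M.r :=
    mul_le_mul_of_nonneg_left h2 (M.lipBound_nonneg y)
  calc q y * |Real.log (M.f y ξ)|
      ≤ q y * (|Real.log (M.f y M.xistar)| + M.lipBound y * M.r) := by
        apply mul_le_mul_of_nonneg_left _ (hq y); linarith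
    _ = q y * |Real.log (M.f y M.xistar)| + q y * M.lipBound y * M.r := by ring

lemma summable_logf (hq : ∀ y, 0 ≤ q y) (hqs : Summable q)
    {ξ : EuclideanSpace ℝ (Fin d)} (hξ : ξ ∈ M.B) :
    Summable (fun y => q y * Real.log (M.f y ξ)) := by
  apply Summable.of_abs
  apply (M.summable_abs_logf hq hqs hξ).congr
  intro y
  rw [abs_mul, abs_of_nonneg (hq y)]

lemma loglik_lip (hq : ∀ y, 0 ≤ q y) (hqs : Summable q)
    {ξ ξ' : EuclideanSpace ℝ (Fin d)} (hξ : ξ ∈ M.B) (hξ' : ξ' ∈ M.B) :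
    |M.loglik ξ - M.loglik ξ'| ≤ (∑' y, q y * M.lipBound y) * ‖ξ - ξ'‖ := by
  have hs1 := M.summable_logf hq hqs hξ
  have hs2 := M.summable_logf hq hqs hξ'
  have hdiff : M.loglik ξ - M.loglik ξ' =
      ∑' y, (q y * Real.log (M.f y ξ) - q y * Real.log (M.f y ξ')) :=
    (Summable.tsum_sub hs1 hs2).symm
  have hb : ∀ y, |q y * Real.log (M.f y ξ) - q y * Real.log (M.f y ξ')| ≤
      (q y * M.lipBound y) * ‖ξ - ξ'‖ := by
    intro y
    rw [← mul_sub, abs_mul, abs_of_nonneg (hq y), mul_assoc]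
    exact mul_le_mul_of_nonneg_left (M.logf_lip y hξ hξ') (hq y)
  have hbs : Summable (fun y => (q y * M.lipBound y) * ‖ξ - ξ'‖) :=
    (M.lipBound_summable hq hqs).mul_right _
  have habs : Summable (fun y =>
      |q y * Real.log (M.f y ξ) - q y * Real.log (M.f y ξ')|) :=
    Summable.of_nonneg_of_le (fun y => abs_nonneg _) hb hbs
  rw [hdiff]
  calc |∑' y, (q y * Real.log (M.f y ξ) - q y * Real.log (M.f y ξ'))|
      ≤ ∑' y, |q y * Real.log (M.f y ξ) - q y * Real.log (M.f y ξ')| := by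
        have h := norm_tsum_le_tsum_norm
          (f := fun y => q y * Real.log (M.f y ξ) - q y * Real.log (M.f y ξ'))
          (by simpa only [Real.norm_eq_abs] using habs)
        simpa only [Real.norm_eq_abs] using h
    _ ≤ ∑' y, (q y * M.lipBound y) * ‖ξ - ξ'‖ := Summable.tsum_le_tsum hb habs hbs
    _ = (∑' y, q y * M.lipBound y) * ‖ξ - ξ'‖ := tsum_mul_right

lemma loglik_strict_max (hq : ∀ y, 0 < q y) (hqs : Summable q)
    {ξ : EuclideanSpace ℝ (Fin d)} (hξ : ξ ∈ M.B) (hne : ξ ≠ M.xistar) :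
    M.loglik ξ < M.loglik M.xistar := by
  have hq0 : ∀ y, 0 ≤ q y := fun y => (hq y).le
  have hkl : ∀ ζ ∈ M.Xi, ∀ y, q y * Real.log (q y / M.f y ζ) =
      q y * Real.log (q y) - q y * Real.log (M.f y ζ) := by
    intro ζ hζ y
    rw [Real.log_div (ne_of_gt (hq y)) (ne_of_gt (M.f_pos y ζ hζ)), mul_sub]
  have hstar := M.summable_logf hq0 hqs M.xistar_mem_B
  have hxi := M.summable_logf hq0 hqs hξ
  have hqlq : Summable (fun y => q y * Real.log (q y)) := by
    apply (M.R3_summable.add hstar).congr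
    intro y
    rw [hkl M.xistar M.xistar_mem y]
    ring
  have hklxi : Summable (fun y => q y * Real.log (q y / M.f y ξ)) := by
    apply (hqlq.sub hxi).congr
    intro y
    rw [hkl ξ (M.ball_subset hξ) y]
  have h1 : ∑' y, q y * Real.log (q y / M.f y M.xistar)
      = (∑' y, q y * Real.log (q y)) - M.loglik M.xistar := by
    unfold loglik
    rw [← Summable.tsum_sub hqlq hstar]
    exact tsum_congr fun y => hkl M.xistar M.xistar_mem y
  have h2 : ∑' y, q y * Real.log (q y / M.f y ξ)
      = (∑' y, q y * Real.log (q y)) - M.loglik ξ := by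
    unfold loglik
    rw [← Summable.tsum_sub hqlq hxi]
    exact tsum_congr fun y => hkl ξ (M.ball_subset hξ) y
  rcases M.R3_unique_min ξ (M.ball_subset hξ) hne with h | h
  · exact absurd hklxi h
  · rw [h1, h2] at h
    linarith

end RegularModel

end ModelLemmas
section MoreLemmas

open Filter Topology MeasureTheory

variable {Y : Type} {q : Y → ℝ} {d : ℕ}

lemma avgLogLik_eq (f : Y → EuclideanSpace ℝ (Fin d) → ℝ) (n : ℕ) (z : ℕ → Y)
    (ξ : EuclideanSpace ℝ (Fin d)) :
    avgLogLik f n (fun i : Fin n => z i) ξ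
      = (∑ i ∈ Finset.range n, Real.log (f (z i) ξ)) / n := by
  rw [avgLogLik, ← Fin.sum_univ_eq_sum_range (fun i => Real.log (f (z i) ξ)) n,
    one_div, inv_mul_eq_div]

namespace RegularModel

variable (M : RegularModel Y q d)

lemma avg_lip (n : ℕ) (z : Fin n → Y) {ξ ξ' : EuclideanSpace ℝ (Fin d)}
    (hξ : ξ ∈ M.B) (hξ' : ξ' ∈ M.B) :
    |avgLogLik M.f n z ξ - avgLogLik M.f n z ξ'|
      ≤ ((1 / (n : ℝ)) * ∑ i, M.lipBound (z i)) * ‖ξ - ξ'‖ := by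
  rw [avgLogLik, avgLogLik, ← mul_sub, ← Finset.sum_sub_distrib, abs_mul, mul_assoc]
  rcases Nat.eq_zero_or_pos n with h | h
  · subst h; simp
  have h1n : |1 / (n : ℝ)| = 1 / (n : ℝ) := by
    rw [abs_of_nonneg]; positivity
  rw [h1n]
  apply mul_le_mul_of_nonneg_left _ (by positivity)
  calc |∑ i, (Real.log (M.f (z i) ξ) - Real.log (M.f (z i) ξ'))|
      ≤ ∑ i, |Real.log (M.f (z i) ξ) - Real.log (M.f (z i) ξ')| :=
        Finset.abs_sum_le_sum_abs _ _
    _ ≤ ∑ i, M.lipBound (z i) * ‖ξ - ξ'‖ :=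
        Finset.sum_le_sum (fun i _ => M.logf_lip (z i) hξ hξ')
    _ = (∑ i, M.lipBound (z i)) * ‖ξ - ξ'‖ := (Finset.sum_mul _ _ _).symm

lemma loglik_continuousOn (hq : ∀ y, 0 ≤ q y) (hqs : Summable q) :
    ContinuousOn M.loglik M.B := by
  have hlip : LipschitzOnWith (Real.toNNReal (∑' y, q y * M.lipBound y)) M.loglik M.B := by
    rw [lipschitzOnWith_iff_norm_sub_le]
    intro x hx y hy
    have h := M.loglik_lip hq hqs hx hy
    have h2 : (∑' y, q y * M.lipBound y) ≤ Real.toNNReal (∑' y, q y * M.lipBound y) :=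
      Real.le_coe_toNNReal _
    have h3 : (0:ℝ) ≤ ‖x - y‖ := norm_nonneg _
    rw [Real.norm_eq_abs]
    calc |M.loglik x - M.loglik y| ≤ (∑' y, q y * M.lipBound y) * ‖x - y‖ := h
      _ ≤ Real.toNNReal (∑' y, q y * M.lipBound y) * ‖x - y‖ := by
          apply mul_le_mul_of_nonneg_right h2 h3
  exact hlip.continuousOn

end RegularModel

end MoreLemmas

end AuxiliaryForProof

/-- under the regularity setting, any sequence of maximum likelihood
estimators converges almost surely to the Kullback–Leibler projection `ξ*`. -/
theorem mle_strong_consistency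
    {Y Ω : Type} [Countable Y] [MeasurableSpace Y] [MeasurableSingletonClass Y]
    [MeasurableSpace Ω] {d : ℕ} {q : Y → ℝ}
    (P : MeasureTheory.Measure Ω) [MeasureTheory.IsProbabilityMeasure P]
    (yseq : ℕ → Ω → Y)
    (hq_pos : ∀ y, 0 < q y) (hq_pmf : ∑' y, q y = 1)
    (hiid : IIDData P yseq q)
    (M : RegularModel Y q d)
    (est : (n : ℕ) → (Fin n → Y) → EuclideanSpace ℝ (Fin d))
    (hest : IsMLESeq M P yseq est) :
    ∀ᵐ ω ∂P, Filter.Tendsto (fun n => est n (fun i : Fin n => yseq i ω))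
      Filter.atTop (nhds M.xistar) := by
  classical
  rcases Nat.eq_zero_or_pos d with hd | hd
  · subst hd
    haveI : Subsingleton (EuclideanSpace ℝ (Fin 0)) := ⟨fun a b => PiLp.ext fun i => i.elim0⟩
    refine Filter.Eventually.of_forall (fun ω => ?_)
    have h : (fun n => est n (fun i : Fin n => yseq i ω)) = fun _ => M.xistar :=
      funext fun n => Subsingleton.elim _ _
    rw [h]
    exact tendsto_const_nhds
  haveI : Nonempty (Fin d) := ⟨⟨0, hd⟩⟩
  haveI : Nontrivial (EuclideanSpace ℝ (Fin d)) := inferInstance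
  have hq0 : ∀ y, 0 ≤ q y := fun y => (hq_pos y).le
  have hqs : Summable q := by
    by_contra h
    rw [tsum_eq_zero_of_not_summable h] at hq_pmf
    norm_num at hq_pmf
  set Λ : ℝ := ∑' y, q y * M.lipBound y with hΛdef
  have hΛ0 : 0 ≤ Λ := tsum_nonneg (fun y => mul_nonneg (hq0 y) (M.lipBound_nonneg y))
  obtain ⟨D, hDc, hDd⟩ := TopologicalSpace.exists_countable_dense (EuclideanSpace ℝ (Fin d))
  have ev_star := slln_pmf hiid (fun y => Real.log (M.f y M.xistar)) M.R6_log
  have ev_h := slln_pmf hiid M.lipBound ((M.lipBound_summable hq0 hqs).congr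
    (fun y => by rw [abs_of_nonneg (M.lipBound_nonneg y)]))
  have ev_D := (MeasureTheory.ae_ball_iff (μ := P) (hDc.mono Set.inter_subset_left)).2
    (fun ξ hξ => slln_pmf hiid (fun y => Real.log (M.f y ξ))
      (M.summable_abs_logf hq0 hqs hξ.2))
  filter_upwards [ev_star, ev_h, ev_D, hest.2.2] with ω hstarω hhω hDω hMLE
  have hstar' : Filter.Tendsto (fun n => avgLogLik M.f n (fun i : Fin n => yseq i ω) M.xistar)
      Filter.atTop (nhds (M.loglik M.xistar)) :=
    Filter.Tendsto.congr (fun n => (avgLogLik_eq M.f n (fun i => yseq i ω) M.xistar).symm) hstarω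
  rw [Metric.tendsto_atTop]
  intro ε hε
  set δ := min (M.r/2) ε with hδdef
  have hδpos : 0 < δ := lt_min (by linarith [M.r_pos]) hε
  have hδr : δ < M.r := lt_of_le_of_lt (min_le_left _ _) (by linarith [M.r_pos])
  have hδε : δ ≤ ε := min_le_right _ _
  set S := Metric.sphere M.xistar δ with hSdef
  have hSB : S ⊆ M.B := fun ζ hζ => by
    have := Metric.mem_sphere.1 hζ
    exact Metric.mem_ball.2 (by rw [this]; exact hδr)
  have hScomp : IsCompact S := isCompact_sphere _ _
  have hSne : S.Nonempty := NormedSpace.sphere_nonempty.2 hδpos.le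
  have hcont := (M.loglik_continuousOn hq0 hqs).mono hSB
  obtain ⟨ζ₀, hζ₀S, hmax⟩ := hScomp.exists_isMaxOn hSne hcont
  have hζ₀ne : ζ₀ ≠ M.xistar := by
    intro h
    have h2 := Metric.mem_sphere.1 hζ₀S
    rw [h, dist_self] at h2
    exact absurd h2.symm (ne_of_gt hδpos)
  have hmlt : M.loglik ζ₀ < M.loglik M.xistar :=
    M.loglik_strict_max hq_pos hqs (hSB hζ₀S) hζ₀ne
  set m := M.loglik ζ₀ with hmdef
  set Lstar := M.loglik M.xistar with hLdef
  set ε' := (Lstar - m)/4 with hε'def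
  have hε'pos : 0 < ε' := by rw [hε'def]; linarith
  set η := min ((M.r - δ)/2) (ε'/(2*Λ + 2)) with hηdef
  have hηpos : 0 < η := lt_min (by linarith) (by positivity)
  have hη1 : η ≤ (M.r - δ)/2 := min_le_left _ _
  have hη2 : (2*Λ + 2) * η ≤ ε' := by
    have h := min_le_right ((M.r - δ)/2) (ε'/(2*Λ+2))
    calc (2*Λ+2)*η ≤ (2*Λ+2) * (ε'/(2*Λ+2)) := by
          exact mul_le_mul_of_nonneg_left h (by linarith)
      _ = ε' := by field_simp
  have cover : S ⊆ ⋃ p ∈ D ∩ M.B, Metric.ball p η := by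
    intro ζ hζ
    obtain ⟨p, hpball, hpD⟩ := Metric.dense_iff.1 hDd ζ η hηpos
    have h1 : dist p ζ < η := Metric.mem_ball.1 hpball
    have h2 : dist ζ M.xistar = δ := Metric.mem_sphere.1 hζ
    have hpB : p ∈ M.B := by
      have h3 := dist_triangle p ζ M.xistar
      exact Metric.mem_ball.2 (by rw [Metric.mem_ball] at *; linarith)
    refine Set.mem_biUnion ⟨hpD, hpB⟩ (Metric.mem_ball.2 ?_)
    rw [dist_comm] at h1
    exact h1
  obtain ⟨t, htsub, htfin, htcov⟩ :=
    hScomp.elim_finite_subcover_image (fun p _ => Metric.isOpen_ball) cover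
  have hev1 : ∀ᶠ n in Filter.atTop,
      (∑ i ∈ Finset.range n, M.lipBound (yseq i ω))/(n:ℝ) < Λ + 1 :=
    hhω.eventually (gt_mem_nhds (lt_add_one Λ))
  have hev2 : ∀ᶠ n in Filter.atTop,
      Lstar - ε' < avgLogLik M.f n (fun i : Fin n => yseq i ω) M.xistar :=
    hstar'.eventually (lt_mem_nhds (by linarith))
  have hev3 : ∀ᶠ n in Filter.atTop, ∀ p ∈ t,
      avgLogLik M.f n (fun i : Fin n => yseq i ω) p < M.loglik p + ε' :=
    htfin.eventually_all.2 (fun p hp =>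
      (Filter.Tendsto.congr (fun n => (avgLogLik_eq M.f n (fun i => yseq i ω) p).symm)
        (hDω p (htsub hp))).eventually
        (gt_mem_nhds (lt_add_of_pos_right _ hε'pos)))
  have hev4 : ∀ᶠ n in Filter.atTop, ∀ ξ ∈ M.Xi,
      avgLogLik M.f n (fun i => yseq i ω) ξ ≤
        avgLogLik M.f n (fun i => yseq i ω) (est n (fun i => yseq i ω)) := by
    obtain ⟨N, hN⟩ := hMLE
    exact Filter.eventually_atTop.2 ⟨N, hN⟩
  obtain ⟨N, hN⟩ := Filter.eventually_atTop.1 (hev1.and (hev2.and (hev3.and hev4)))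
  refine ⟨N, fun n hn => ?_⟩
  obtain ⟨h1, h2, h3, h4⟩ := hN n hn
  have hLn : (1/(n:ℝ)) * ∑ i : Fin n, M.lipBound (yseq i ω) < Λ + 1 := by
    rw [one_div, inv_mul_eq_div, Fin.sum_univ_eq_sum_range (fun i => M.lipBound (yseq i ω)) n]
    exact h1
  have hLn0 : 0 ≤ (1/(n:ℝ)) * ∑ i : Fin n, M.lipBound (yseq i ω) :=
    mul_nonneg (by positivity) (Finset.sum_nonneg (fun i _ => M.lipBound_nonneg _))
  have hsph : ∀ ζ ∈ S, avgLogLik M.f n (fun i : Fin n => yseq i ω) ζ ≤ Lstar - 2*ε' := by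
    intro ζ hζ
    obtain ⟨p, hpt, hpball⟩ := Set.mem_iUnion₂.1 (htcov hζ)
    have hpB : p ∈ M.B := (htsub hpt).2
    have hζB : ζ ∈ M.B := hSB hζ
    have hdist : ‖ζ - p‖ < η := by rw [← dist_eq_norm]; exact Metric.mem_ball.1 hpball
    have hlipn := M.avg_lip n (fun i => yseq i ω) hζB hpB
    have h5 : ((1/(n:ℝ)) * ∑ i : Fin n, M.lipBound (yseq i ω)) * ‖ζ - p‖ ≤ (Λ+1) * η :=
      mul_le_mul hLn.le hdist.le (norm_nonneg _) (by linarith)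
    have h6 := le_abs_self (avgLogLik M.f n (fun i : Fin n => yseq i ω) ζ -
      avgLogLik M.f n (fun i : Fin n => yseq i ω) p)
    have step2 : avgLogLik M.f n (fun i : Fin n => yseq i ω) p < M.loglik p + ε' := h3 p hpt
    have step3 : M.loglik p ≤ m + Λ * η := by
      have hlip := M.loglik_lip hq0 hqs hpB hζB
      have hnpζ : ‖p - ζ‖ < η := by
        rw [← dist_eq_norm]
        rw [← dist_eq_norm, dist_comm] at hdist
        exact hdist
      have hΛη : Λ * ‖p - ζ‖ ≤ Λ * η := mul_le_mul_of_nonneg_left hnpζ.le hΛ0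
      have hmaxζ : M.loglik ζ ≤ m := hmax hζ
      have h7 := le_abs_self (M.loglik p - M.loglik ζ)
      linarith
    have hm : m = Lstar - 4*ε' := by rw [hε'def]; ring
    nlinarith [hηpos.le, hΛ0]
  set zhat := est n (fun i : Fin n => yseq i ω) with hzdef
  set lam := Lstar - 2*ε' + ε'/2 with hlamdef
  have hAstar : lam < avgLogLik M.f n (fun i : Fin n => yseq i ω) M.xistar := by
    rw [hlamdef]; linarith
  have hAhat : lam < avgLogLik M.f n (fun i : Fin n => yseq i ω) zhat :=
    lt_of_lt_of_le hAstar (h4 M.xistar M.xistar_mem)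
  have hpre := M.R8 n (fun i => yseq i ω) lam
  suffices hlt : dist zhat M.xistar < δ by exact hlt.trans_le hδε
  by_contra hcon
  push_neg at hcon
  have hne : dist zhat M.xistar ≠ δ := by
    intro h
    have hzS : zhat ∈ S := Metric.mem_sphere.2 h
    have := hsph zhat hzS
    rw [hlamdef] at hAhat
    linarith
  have hgt : δ < dist zhat M.xistar := lt_of_le_of_ne hcon (Ne.symm hne)
  set v := {x : EuclideanSpace ℝ (Fin d) | δ < dist x M.xistar} with hvdef
  have hv : IsOpen v := isOpen_lt continuous_const (continuous_id.dist continuous_const)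
  have hcover : {ξ | ξ ∈ M.Xi ∧ lam < avgLogLik M.f n (fun i : Fin n => yseq i ω) ξ}
      ⊆ Metric.ball M.xistar δ ∪ v := by
    intro ξ hξ
    rcases lt_trichotomy (dist ξ M.xistar) δ with h | h | h
    · exact Or.inl (Metric.mem_ball.2 h)
    · exfalso
      have := hsph ξ (Metric.mem_sphere.2 h)
      have h8 := hξ.2
      rw [hlamdef] at h8
      linarith
    · exact Or.inr h
  have hres := hpre (Metric.ball M.xistar δ) v Metric.isOpen_ball hv hcover
    ⟨M.xistar, ⟨M.xistar_mem, hAstar⟩, Metric.mem_ball_self hδpos⟩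
    ⟨zhat, ⟨hest.2.1 n _, hAhat⟩, hgt⟩
  obtain ⟨x, hxU, hxu, hxv⟩ := hres
  have hx1 : dist x M.xistar < δ := Metric.mem_ball.1 hxu
  have hx2 : δ < dist x M.xistar := hxv
  linarith
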